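/- Let 0 < δ < 1 and define f(x) = x^{δ−1} χ_{(0,1)}(x) and b(x) = log|x|. Then for every x ∈ (0,1), |[b,H]f(x)| > x^{δ−1}/δ², where [b,H]f(x) = ∫₀¹ (log x − log y)/(x−y) · y^{δ−1} dy (the commutator of the Hilbert transform with b applied to f, up to a factor 1/π). -/

import Mathlib

open MeasureTheory Set Real Filter Topology

-- slope bound: log b - log a ≤ (b-a)/a
lemma aux_slope {a b : ℝ} (ha : 0 < a) (hab : a ≤ b) :
    Real.log b - Real.log a ≤ (b - a) / a := by
  have hb : 0 < b := lt_of_lt_of_le ha hab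
  have h := Real.log_le_sub_one_of_pos (div_pos hb ha)
  rw [Real.log_div hb.ne' ha.ne'] at h
  have : b / a - 1 = (b - a) / a := by field_simp
  linarith [this ▸ h]

-- |log y| * y^(δ-1) integrable on (0,1)
lemma aux_log_int (δ : ℝ) (hδ : 0 < δ) :
    IntegrableOn (fun y : ℝ => |Real.log y| * y ^ (δ - 1)) (Ioo (0:ℝ) 1) := by
  have hmeas : AEStronglyMeasurable (fun y : ℝ => |Real.log y| * y ^ (δ - 1))
      (volume.restrict (Ioo (0:ℝ) 1)) := by
    apply Measurable.aestronglyMeasurable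
    measurability
  have hint : IntegrableOn (fun y : ℝ => (2/δ) * y ^ (δ/2 - 1)) (Ioo (0:ℝ) 1) :=
    ((intervalIntegral.integrableOn_Ioo_rpow_iff zero_lt_one).2 (by linarith)).const_mul _
  refine hint.mono' hmeas ?_
  filter_upwards [ae_restrict_mem measurableSet_Ioo] with y hy
  have hy0 : (0:ℝ) < y := hy.1
  have hlog : |Real.log y| ≤ (2/δ) * y ^ (-(δ/2)) := by
    have h1 : Real.log (y ^ (-(δ/2))) ≤ y ^ (-(δ/2)) - 1 :=
      Real.log_le_sub_one_of_pos (Real.rpow_pos_of_pos hy0 _)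
    rw [Real.log_rpow hy0] at h1
    have h2 : |Real.log y| = -Real.log y := abs_of_nonpos (Real.log_nonpos hy0.le hy.2.le)
    have h3 : (0:ℝ) < y ^ (-(δ/2)) := Real.rpow_pos_of_pos hy0 _
    have h4 : (0:ℝ) < 2/δ := by positivity
    have h5 := mul_le_mul_of_nonneg_left h1 h4.le
    have h6 : (2/δ) * (-(δ/2) * Real.log y) = -Real.log y := by field_simp
    rw [h2]
    nlinarith
  have hpow : (0:ℝ) ≤ y ^ (δ - 1) := (Real.rpow_pos_of_pos hy0 _).le
  rw [Real.norm_eq_abs, abs_of_nonneg (mul_nonneg (abs_nonneg _) hpow)]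
  calc |Real.log y| * y ^ (δ - 1) ≤ ((2/δ) * y ^ (-(δ/2))) * y ^ (δ - 1) :=
        mul_le_mul_of_nonneg_right hlog hpow
    _ = (2/δ) * y ^ (δ/2 - 1) := by
        rw [mul_assoc, ← Real.rpow_add hy0]; ring_nf

-- (log x - log y) * y^(δ-1) integrable on Ioo 0 x
lemma aux_num_int (δ x : ℝ) (hδ : 0 < δ) (hx0 : 0 < x) (hx1 : x < 1) :
    IntegrableOn (fun y : ℝ => (Real.log x - Real.log y) * y ^ (δ - 1)) (Ioo (0:ℝ) x) := by
  have hmeas : AEStronglyMeasurable (fun y : ℝ => (Real.log x - Real.log y) * y ^ (δ - 1))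
      (volume.restrict (Ioo (0:ℝ) x)) := by
    apply Measurable.aestronglyMeasurable; measurability
  have hint : IntegrableOn
      (fun y : ℝ => |Real.log x| * y ^ (δ - 1) + |Real.log y| * y ^ (δ - 1)) (Ioo (0:ℝ) x) := by
    apply IntegrableOn.mono_set _ (Ioo_subset_Ioo le_rfl hx1.le)
    exact ((((intervalIntegral.integrableOn_Ioo_rpow_iff zero_lt_one).2
      (by linarith : (-1:ℝ) < δ - 1)).const_mul _).add (aux_log_int δ hδ))
  refine hint.mono' hmeas ?_
  filter_upwards [ae_restrict_mem measurableSet_Ioo] with y hy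
  have hy0 : (0:ℝ) < y := hy.1
  have hpow : (0:ℝ) ≤ y ^ (δ - 1) := (Real.rpow_pos_of_pos hy0 _).le
  rw [Real.norm_eq_abs, abs_mul, abs_of_nonneg hpow]
  have : |Real.log x - Real.log y| ≤ |Real.log x| + |Real.log y| := abs_sub _ _
  nlinarith [abs_nonneg (Real.log x), abs_nonneg (Real.log y)]

-- FTC computation
lemma aux_ftc (δ x : ℝ) (hδ : 0 < δ) (hx0 : 0 < x) (hx1 : x < 1) :
    ∫ y in Ioo (0:ℝ) x, (Real.log x - Real.log y) * y ^ (δ - 1) = x ^ δ / δ ^ 2 := by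
  set H : ℝ → ℝ := fun y => Real.log x * y ^ δ / δ - Real.log y * y ^ δ / δ + y ^ δ / δ ^ 2
    with hH
  have hcont : ContinuousOn H (Icc 0 x) := by
    have hp : ContinuousOn (fun y : ℝ => y ^ δ) (Icc 0 x) :=
      continuousOn_id.rpow_const (fun y _ => Or.inr hδ.le)
    have hlp : ContinuousOn (fun y : ℝ => Real.log y * y ^ δ) (Icc 0 x) := by
      intro y hy
      rcases eq_or_lt_of_le hy.1 with h0 | h0
      · subst h0
        have ht : Tendsto (fun y : ℝ => Real.log y * y ^ δ) (𝓝[>] 0) (𝓝 0) :=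
          tendsto_log_mul_rpow_nhdsGT_zero hδ
        have : ContinuousWithinAt (fun y : ℝ => Real.log y * y ^ δ) (Ioi 0) 0 := by
          unfold ContinuousWithinAt
          simpa [Real.log_zero, Real.zero_rpow hδ.ne'] using ht
        have h2 : ContinuousWithinAt (fun y : ℝ => Real.log y * y ^ δ)
            (insert 0 (Ioi 0)) 0 := this.insert
        exact h2.mono (fun z hz => by
          rcases eq_or_lt_of_le hz.1 with h | h
          · exact h ▸ mem_insert _ _
          · exact mem_insert_of_mem _ h)
      · exact ((Real.continuousAt_log h0.ne').mul
          (Real.continuousAt_rpow_const y δ (Or.inl h0.ne'))).continuousWithinAt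
    exact (((continuousOn_const.mul hp).div_const δ).sub (hlp.div_const δ)).add
      (hp.div_const (δ ^ 2))
  have hderiv : ∀ y ∈ Ioo (0:ℝ) x,
      HasDerivAt H ((Real.log x - Real.log y) * y ^ (δ - 1)) y := by
    intro y hy
    have hy0 : (0:ℝ) < y := hy.1
    have hp : HasDerivAt (fun y : ℝ => y ^ δ) (δ * y ^ (δ - 1)) y :=
      Real.hasDerivAt_rpow_const (Or.inl hy0.ne')
    have hl : HasDerivAt Real.log y⁻¹ y := Real.hasDerivAt_log hy0.ne'
    have h1 : HasDerivAt (fun y : ℝ => Real.log x * y ^ δ / δ)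
        (Real.log x * (δ * y ^ (δ - 1)) / δ) y := (hp.const_mul _).div_const _
    have h2 : HasDerivAt (fun y : ℝ => Real.log y * y ^ δ / δ)
        ((y⁻¹ * y ^ δ + Real.log y * (δ * y ^ (δ - 1))) / δ) y := (hl.mul hp).div_const _
    have h3 : HasDerivAt (fun y : ℝ => y ^ δ / δ ^ 2) (δ * y ^ (δ - 1) / δ ^ 2) y :=
      hp.div_const _
    have := (h1.sub h2).add h3
    convert this using 1
    · rfl
    · rfl
    · rfl
    have hyd : y⁻¹ * y ^ δ = y ^ (δ - 1) := by
      rw [Real.rpow_sub_one hy0.ne']; field_simp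
    rw [hyd]
    field_simp
    ring
  have hint : IntervalIntegrable (fun y : ℝ => (Real.log x - Real.log y) * y ^ (δ - 1))
      volume 0 x := by
    rw [intervalIntegrable_iff_integrableOn_Ioo_of_le hx0.le]
    exact aux_num_int δ x hδ hx0 hx1
  have := intervalIntegral.integral_eq_sub_of_hasDerivAt_of_le hx0.le hcont hderiv hint
  rw [intervalIntegral.integral_of_le hx0.le, MeasureTheory.integral_Ioc_eq_integral_Ioo] at this
  rw [this, hH]
  simp only [Real.log_zero, Real.zero_rpow hδ.ne']
  ring

/-- for `f(x) = x^{δ−1}χ_{(0,1)}`, `b = log|x|`, the commutator of the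
Hilbert transform satisfies `|[b,H]f(x)| > x^{δ−1}/δ²` on `(0,1)`. -/
theorem stmt17 (δ : ℝ) (hδ : 0 < δ) (hδ1 : δ < 1) (x : ℝ) (hx : x ∈ Set.Ioo (0:ℝ) 1) :
    x ^ (δ - 1) / δ ^ 2 <
      |∫ y in Set.Ioo (0:ℝ) 1, (Real.log x - Real.log y) / (x - y) * y ^ (δ - 1)| := by
  obtain ⟨hx0, hx1⟩ := hx
  set F : ℝ → ℝ := fun y => (Real.log x - Real.log y) / (x - y) * y ^ (δ - 1) with hFdef
  have hFnn : ∀ y ∈ Ioo (0:ℝ) 1, 0 ≤ F y := by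
    intro y hy
    have hp : (0:ℝ) ≤ y ^ (δ - 1) := (Real.rpow_pos_of_pos hy.1 _).le
    rcases lt_trichotomy y x with h | h | h
    · have hnum : 0 ≤ Real.log x - Real.log y := by
        have := Real.log_lt_log hy.1 h; linarith
      exact mul_nonneg (div_nonneg hnum (by linarith)) hp
    · simp [hFdef, h]
    · have hnum : 0 ≤ Real.log y - Real.log x := by
        have := Real.log_lt_log hx0 h; linarith
      have heq : (Real.log x - Real.log y) / (x - y) = (Real.log y - Real.log x) / (y - x) := by
        rw [← neg_div_neg_eq]; ring_nf
      show 0 ≤ (Real.log x - Real.log y) / (x - y) * y ^ (δ - 1)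
      rw [heq]
      exact mul_nonneg (div_nonneg hnum (by linarith)) hp
  have hlogx : Real.log x ≤ 0 := Real.log_nonpos hx0.le hx1.le
  have hFbd : ∀ y ∈ Ioo (0:ℝ) 1,
      F y ≤ (2 / x) * ((1 + |Real.log y|) * y ^ (δ - 1)) := by
    intro y hy
    have hy0 : (0:ℝ) < y := hy.1
    have hp : (0:ℝ) ≤ y ^ (δ - 1) := (Real.rpow_pos_of_pos hy0 _).le
    have habs : |Real.log y| = -Real.log y := abs_of_nonpos (Real.log_nonpos hy0.le hy.2.le)
    have h2x : (0:ℝ) < 2 / x := by positivity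
    have hone : (1:ℝ) ≤ 1 + |Real.log y| := by linarith [abs_nonneg (Real.log y)]
    suffices hs : (Real.log x - Real.log y) / (x - y) ≤ (2 / x) * (1 + |Real.log y|) by
      calc F y ≤ ((2 / x) * (1 + |Real.log y|)) * y ^ (δ - 1) :=
            mul_le_mul_of_nonneg_right hs hp
        _ = (2 / x) * ((1 + |Real.log y|) * y ^ (δ - 1)) := by ring
    rcases lt_trichotomy y x with h | h | h
    · have hnum : 0 ≤ Real.log x - Real.log y := by
        have := Real.log_lt_log hy0 h; linarith
      rcases le_or_gt y (x / 2) with h2 | h2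
      · have hd : x / 2 ≤ x - y := by linarith
        have := div_le_div_of_nonneg_left hnum (by positivity : (0:ℝ) < x / 2) hd
        have hnum2 : Real.log x - Real.log y ≤ |Real.log y| := by rw [habs]; linarith
        calc (Real.log x - Real.log y) / (x - y) ≤ (Real.log x - Real.log y) / (x / 2) := this
          _ = (2 / x) * (Real.log x - Real.log y) := by field_simp
          _ ≤ (2 / x) * (1 + |Real.log y|) := by nlinarith
      · have hsl := aux_slope hy0 h.le
        have hxy : (0:ℝ) < x - y := by linarith
        calc (Real.log x - Real.log y) / (x - y) ≤ ((x - y) / y) / (x - y) := by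
              gcongr
          _ = 1 / y := by field_simp
          _ ≤ (2 / x) * (1 + |Real.log y|) := by
              have h1y : 1 / y ≤ 2 / x := by
                rw [div_le_div_iff₀ hy0 hx0]; linarith
              nlinarith
    · rw [h]; simp only [sub_self, zero_div]
      positivity
    · have hnum := aux_slope hx0 h.le
      have heq : (Real.log x - Real.log y) / (x - y) = (Real.log y - Real.log x) / (y - x) := by
        rw [← neg_div_neg_eq]; ring_nf
      rw [heq]
      have hyx : (0:ℝ) < y - x := by linarith
      calc (Real.log y - Real.log x) / (y - x) ≤ ((y - x) / x) / (y - x) := by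
            gcongr
        _ = 1 / x := by field_simp
        _ ≤ (2 / x) * (1 + |Real.log y|) := by
            have h12 : 1 / x ≤ 2 / x := by rw [div_le_div_iff₀ hx0 hx0]; nlinarith
            nlinarith
  have hg_int : IntegrableOn (fun y : ℝ => (2 / x) * ((1 + |Real.log y|) * y ^ (δ - 1)))
      (Ioo (0:ℝ) 1) := by
    have h1 : IntegrableOn (fun y : ℝ => y ^ (δ - 1) + |Real.log y| * y ^ (δ - 1))
        (Ioo (0:ℝ) 1) :=
      ((intervalIntegral.integrableOn_Ioo_rpow_iff zero_lt_one).2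
        (by linarith : (-1:ℝ) < δ - 1)).add (aux_log_int δ hδ)
    exact IntegrableOn.congr_fun (h1.const_mul (2 / x)) (fun y _ => by ring) measurableSet_Ioo
  have hFmeas : AEStronglyMeasurable F (volume.restrict (Ioo (0:ℝ) 1)) := by
    have hm1 : Measurable fun y : ℝ => y ^ (δ - 1) := by measurability
    have hm2 : Measurable fun y : ℝ => (Real.log x - Real.log y) / (x - y) :=
      (measurable_const.sub Real.measurable_log).div (measurable_const.sub measurable_id)
    exact (hm2.mul hm1).aestronglyMeasurable
  have hFint : IntegrableOn F (Ioo (0:ℝ) 1) := by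
    refine hg_int.mono' hFmeas ?_
    filter_upwards [ae_restrict_mem measurableSet_Ioo] with y hy
    rw [Real.norm_eq_abs, abs_of_nonneg (hFnn y hy)]
    exact hFbd y hy
  have hsub : Ioo (0:ℝ) x ⊆ Ioo (0:ℝ) 1 := Ioo_subset_Ioo le_rfl hx1.le
  have hFintx : IntegrableOn F (Ioo (0:ℝ) x) := hFint.mono_set hsub
  set G : ℝ → ℝ := fun y => (Real.log x - Real.log y) / x * y ^ (δ - 1) with hGdef
  have hGint : IntegrableOn G (Ioo (0:ℝ) x) := by
    exact IntegrableOn.congr_fun ((aux_num_int δ x hδ hx0 hx1).const_mul x⁻¹)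
      (fun y _ => by rw [hGdef]; ring) measurableSet_Ioo
  have hGval : ∫ y in Ioo (0:ℝ) x, G y = x ^ (δ - 1) / δ ^ 2 := by
    have h1 : ∫ y in Ioo (0:ℝ) x, G y
        = ∫ y in Ioo (0:ℝ) x, x⁻¹ * ((Real.log x - Real.log y) * y ^ (δ - 1)) :=
      setIntegral_congr_fun measurableSet_Ioo (fun y _ => by rw [hGdef]; ring)
    rw [h1, integral_const_mul, aux_ftc δ x hδ hx0 hx1, Real.rpow_sub_one hx0.ne']
    field_simp
  have hlt : ∫ y in Ioo (0:ℝ) x, G y < ∫ y in Ioo (0:ℝ) x, F y := by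
    rw [← sub_pos, ← integral_sub hFintx hGint]
    have hpos : ∀ y ∈ Ioo (0:ℝ) x, 0 < F y - G y := by
      intro y hy
      have hy0 : (0:ℝ) < y := hy.1
      have hnum : 0 < Real.log x - Real.log y := by
        have := Real.log_lt_log hy0 hy.2; linarith
      have hp : (0:ℝ) < y ^ (δ - 1) := Real.rpow_pos_of_pos hy0 _
      have hxy : (0:ℝ) < x - y := by linarith [hy.2]
      have hdiv : (Real.log x - Real.log y) / x < (Real.log x - Real.log y) / (x - y) :=
        div_lt_div_of_pos_left hnum hxy (by linarith)
      have : G y < F y := by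
        show (Real.log x - Real.log y) / x * y ^ (δ - 1)
          < (Real.log x - Real.log y) / (x - y) * y ^ (δ - 1)
        exact mul_lt_mul_of_pos_right hdiv hp
      linarith
    have hnn : 0 ≤ᵐ[volume.restrict (Ioo (0:ℝ) x)] fun y => F y - G y := by
      filter_upwards [ae_restrict_mem measurableSet_Ioo] with y hy
      exact (hpos y hy).le
    rw [setIntegral_pos_iff_support_of_nonneg_ae hnn (hFintx.sub hGint)]
    have hss : Ioo (0:ℝ) x ⊆ Function.support (fun y => F y - G y) ∩ Ioo (0:ℝ) x :=
      fun y hy => ⟨(hpos y hy).ne', hy⟩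
    calc (0:ENNReal) < volume (Ioo (0:ℝ) x) := by
          rw [Real.volume_Ioo]; simpa using hx0
      _ ≤ volume (Function.support (fun y => F y - G y) ∩ Ioo (0:ℝ) x) := measure_mono hss
  have hmono : ∫ y in Ioo (0:ℝ) x, F y ≤ ∫ y in Ioo (0:ℝ) 1, F y := by
    refine setIntegral_mono_set hFint ?_ hsub.eventuallyLE
    filter_upwards [ae_restrict_mem measurableSet_Ioo] with y hy
    exact hFnn y hy
  calc x ^ (δ - 1) / δ ^ 2 = ∫ y in Ioo (0:ℝ) x, G y := hGval.symm
    _ < ∫ y in Ioo (0:ℝ) x, F y := hlt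
    _ ≤ ∫ y in Ioo (0:ℝ) 1, F y := hmono
    _ ≤ |∫ y in Ioo (0:ℝ) 1, F y| := le_abs_self _
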